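/- $QA_{\varphi,\psi}=L^1$ if and only if $\varphi$ is equivalent to the identity. Precisely: there exists a constant $K>0$ such that $K^{-1}\|f\|_1\le\|f\|_{\varphi,\psi}\le K\,\|f\|_1$ for every measurable function $f$ on $[0,1]$ if and only if there exists a constant $C>0$ with $\varphi(t)\le C\,t$ for all $t\in[0,1]$. -/

import Mathlib

open MeasureTheory ENNReal Set Filter Topology

noncomputable section

/-- Lebesgue measure restricted to the interval `[0,1]`. -/
def μ01 : Measure ℝ := volume.restrict (Set.Icc 0 1)

/-- `φ : [0,1] → [0,∞)` is concave, non-decreasing, and vanishes only at the origin. -/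
structure IsPhi (φ : ℝ → ℝ) : Prop where
  concave : ConcaveOn ℝ (Set.Icc 0 1) φ
  mono : MonotoneOn φ (Set.Icc 0 1)
  zero : φ 0 = 0
  pos : ∀ t : ℝ, 0 < t → t ≤ 1 → 0 < φ t

/-- `ψ : [0,∞) → [0,∞)` is concave, non-decreasing, and vanishes only at the origin. -/
structure IsPsi (ψ : ℝ → ℝ) : Prop where
  concave : ConcaveOn ℝ (Set.Ici 0) ψ
  mono : MonotoneOn ψ (Set.Ici 0)
  zero : ψ 0 = 0
  pos : ∀ t : ℝ, 0 < t → 0 < ψ t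

/-- A sequence `g` of nonnegative `L^∞` functions with `|f| ≤ ∑ₙ gₙ` a.e. -/
def Admissible (f : ℝ → ℝ) (g : ℕ → ℝ → ℝ) : Prop :=
  (∀ n, AEMeasurable (g n) μ01) ∧
  (∀ n, eLpNorm (g n) ⊤ μ01 < ⊤) ∧
  (∀ n x, 0 ≤ g n x) ∧
  (∀ᵐ x ∂μ01, ENNReal.ofReal |f x| ≤ ∑' n : ℕ, ENNReal.ofReal (g n x))

/-- The cost `∑ₙ ψ(n) ‖gₙ‖_∞ φ(‖gₙ‖₁/‖gₙ‖_∞)` of a decomposition (index shifted by 1;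
`0/0 = 0` by the `ℝ≥0∞` division convention, and `φ 0 = 0`). -/
def seqCost (φ ψ : ℝ → ℝ) (g : ℕ → ℝ → ℝ) : ℝ≥0∞ :=
  ∑' n : ℕ, ENNReal.ofReal
    (ψ ((n : ℝ) + 1) * (eLpNorm (g n) ⊤ μ01).toReal *
      φ ((eLpNorm (g n) 1 μ01 / eLpNorm (g n) ⊤ μ01).toReal))

/-- The quasi-norm `‖f‖_{φ,ψ}` (equal to `∞` when no admissible decomposition exists). -/
def QANorm (φ ψ : ℝ → ℝ) (f : ℝ → ℝ) : ℝ≥0∞ :=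
  ⨅ (g : ℕ → ℝ → ℝ) (_ : Admissible f g), seqCost φ ψ g

/-- Membership in the space `QA_{φ,ψ}`. -/
def MemQA (φ ψ : ℝ → ℝ) (f : ℝ → ℝ) : Prop :=
  AEMeasurable f μ01 ∧ QANorm φ ψ f < ⊤

/-- The decreasing rearrangement `f*` of `f` on `[0,1]`. -/
def decRearr (f : ℝ → ℝ) (t : ℝ) : ℝ :=
  sInf {s : ℝ | 0 ≤ s ∧ μ01 {x | s < |f x|} ≤ ENNReal.ofReal t}

/-- The limit `ζ(0⁺)` of a non-decreasing function `ζ` on `[0,1]`. -/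
def limZero (ζ : ℝ → ℝ) : ℝ := sInf (ζ '' Set.Ioc 0 1)

/-- The Lorentz norm `‖f‖_{Λ_ζ} = ∫₀¹ f* dζ = ‖f‖_∞ ζ(0⁺) + ∫₀¹ f*(s) ζ'(s) ds`
(for `ζ` concave the derivative exists a.e. and `ζ` is absolutely continuous on `(0,1]`). -/
def lorentzNorm (ζ : ℝ → ℝ) (f : ℝ → ℝ) : ℝ≥0∞ :=
  eLpNorm f ⊤ μ01 * ENNReal.ofReal (limZero ζ) +
    ∫⁻ s in Set.Ioc (0:ℝ) 1, ENNReal.ofReal (decRearr f s * deriv ζ s)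

/-- Membership in the Lorentz space `Λ_ζ`. -/
def MemLorentz (ζ : ℝ → ℝ) (f : ℝ → ℝ) : Prop :=
  AEMeasurable f μ01 ∧ lorentzNorm ζ f < ⊤

/-- The quasi-concave function `φ_s(t) = inf_n max{sₙ,t} (φ(sₙ)/sₙ) ψ(n)` (index shifted by 1). -/
def phiSeq (φ ψ : ℝ → ℝ) (s : ℕ → ℝ) (t : ℝ) : ℝ :=
  if t = 0 then 0 else ⨅ n : ℕ, max (s n) t * (φ (s n) / s n) * ψ ((n : ℝ) + 1)

/-- The function `τ(t) = φ(t) ψ(logbar(φ(t)/t))` with `logbar t = 1 + log⁺ t`. -/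
def tauF (φ ψ : ℝ → ℝ) (t : ℝ) : ℝ :=
  if t = 0 then 0 else φ t * ψ (1 + max (Real.log (φ t / t)) 0)

/-! ### Auxiliary lemmas -/

instance : IsProbabilityMeasure μ01 :=
  ⟨by simp [μ01, Real.volume_Icc]⟩

lemma phi_nonneg {φ : ℝ → ℝ} (hφ : IsPhi φ) {r : ℝ} (h0 : 0 ≤ r) (h1 : r ≤ 1) : 0 ≤ φ r := by
  rcases eq_or_lt_of_le h0 with h | h
  · simp [← h, hφ.zero]
  · exact (hφ.pos r h h1).le

lemma phi_concave_bound {φ : ℝ → ℝ} (hφ : IsPhi φ) {r t : ℝ} (hr : 0 ≤ r) (hrt : r ≤ t)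
    (ht : 0 < t) (ht1 : t ≤ 1) : r / t * φ t ≤ φ r := by
  have hrt1 : r / t ≤ 1 := (div_le_one ht).mpr hrt
  have hxmem : t ∈ Set.Icc (0:ℝ) 1 := Set.mem_Icc.mpr ⟨ht.le, ht1⟩
  have hymem : (0:ℝ) ∈ Set.Icc (0:ℝ) 1 := Set.mem_Icc.mpr ⟨le_rfl, zero_le_one⟩
  have haa : (0:ℝ) ≤ r / t := by positivity
  have hbb : (0:ℝ) ≤ 1 - r / t := by linarith
  have habab : r / t + (1 - r / t) = 1 := by ring
  have h := hφ.concave.2 hxmem hymem haa hbb habab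
  have harg : r / t * t + (1 - r / t) * 0 = r := by field_simp; ring
  rw [smul_eq_mul, smul_eq_mul, smul_eq_mul, smul_eq_mul, harg, hφ.zero, mul_zero, add_zero] at h
  exact h

lemma psi_one_le {ψ : ℝ → ℝ} (hψ : IsPsi ψ) (n : ℕ) : ψ 1 ≤ ψ ((n : ℝ) + 1) := by
  have h0 : (0:ℝ) ≤ (n:ℝ) := Nat.cast_nonneg n
  exact hψ.mono (Set.mem_Ici.mpr zero_le_one) (Set.mem_Ici.mpr (by linarith)) (by linarith)

lemma psi_le_lin {ψ : ℝ → ℝ} (hψ : IsPsi ψ) (n : ℕ) : ψ ((n : ℝ) + 1) ≤ ((n : ℝ) + 1) * ψ 1 := by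
  have hn : (0:ℝ) < (n : ℝ) + 1 := by positivity
  have hb : 1 / ((n:ℝ) + 1) ≤ 1 := by
    rw [div_le_one hn]
    have : (0:ℝ) ≤ (n:ℝ) := Nat.cast_nonneg n
    linarith
  have hxmem : (n:ℝ) + 1 ∈ Set.Ici (0:ℝ) := Set.mem_Ici.mpr hn.le
  have hymem : (0:ℝ) ∈ Set.Ici (0:ℝ) := Set.mem_Ici.mpr le_rfl
  have haa : (0:ℝ) ≤ 1 / ((n:ℝ) + 1) := by positivity
  have hbb : (0:ℝ) ≤ 1 - 1 / ((n:ℝ) + 1) := by linarith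
  have habab : 1 / ((n:ℝ) + 1) + (1 - 1 / ((n:ℝ) + 1)) = 1 := by ring
  have h := hψ.concave.2 hxmem hymem haa hbb habab
  have harg : 1 / ((n:ℝ) + 1) * ((n:ℝ) + 1) + (1 - 1 / ((n:ℝ) + 1)) * 0 = 1 := by field_simp; ring
  rw [smul_eq_mul, smul_eq_mul, smul_eq_mul, smul_eq_mul, harg, hψ.zero, mul_zero, add_zero] at h
  calc ψ ((n:ℝ) + 1) = ((n:ℝ) + 1) * (1 / ((n:ℝ) + 1) * ψ ((n:ℝ) + 1)) := by field_simp
    _ ≤ ((n:ℝ) + 1) * ψ 1 := mul_le_mul_of_nonneg_left h hn.le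

lemma elp_one_le_top {g : ℝ → ℝ} (hg : AEMeasurable g μ01) :
    eLpNorm g 1 μ01 ≤ eLpNorm g ⊤ μ01 :=
  eLpNorm_le_eLpNorm_of_exponent_le le_top hg.aestronglyMeasurable

lemma ennnorm_abs (x : ℝ) : (‖x‖₊ : ℝ≥0∞) = ENNReal.ofReal |x| := by
  rw [← Real.nnnorm_abs]
  exact Real.enorm_eq_ofReal (abs_nonneg _)

lemma elp_one_eq {g : ℝ → ℝ} (hg : ∀ x, 0 ≤ g x) :
    eLpNorm g 1 μ01 = ∫⁻ x, ENNReal.ofReal (g x) ∂μ01 := by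
  rw [eLpNorm_one_eq_lintegral_enorm]
  exact lintegral_congr fun x => Real.enorm_eq_ofReal (hg x)

lemma ofReal_min' (x y : ℝ) :
    ENNReal.ofReal (min x y) = min (ENNReal.ofReal x) (ENNReal.ofReal y) := by
  rcases le_total x y with h | h
  · rw [min_eq_left h, min_eq_left (ENNReal.ofReal_le_ofReal h)]
  · rw [min_eq_right h, min_eq_right (ENNReal.ofReal_le_ofReal h)]

lemma mu01_Icc {t : ℝ} (ht0 : 0 ≤ t) (ht1 : t ≤ 1) :
    μ01 (Set.Icc 0 t) = ENNReal.ofReal t := by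
  rw [μ01, Measure.restrict_apply measurableSet_Icc,
    Set.inter_eq_self_of_subset_left (Set.Icc_subset_Icc le_rfl ht1), Real.volume_Icc, sub_zero]

/-- Key lower bound for the cost of any decomposition. -/
lemma cost_lower {φ ψ : ℝ → ℝ} (hφ : IsPhi φ) (hψ : IsPsi ψ) {g : ℕ → ℝ → ℝ}
    (hmeas : ∀ n, AEMeasurable (g n) μ01) (htop : ∀ n, eLpNorm (g n) ⊤ μ01 < ⊤)
    {t : ℝ} (ht : 0 < t) (ht1 : t ≤ 1) :
    ENNReal.ofReal (ψ 1 * (φ t / t)) *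
      ∑' n, min (eLpNorm (g n) 1 μ01) (ENNReal.ofReal t * eLpNorm (g n) ⊤ μ01)
      ≤ seqCost φ ψ g := by
  have hφt : 0 ≤ φ t := phi_nonneg hφ ht.le ht1
  have hψ1 : 0 ≤ ψ 1 := (hψ.pos 1 one_pos).le
  have hc1 : 0 ≤ φ t / t := div_nonneg hφt ht.le
  rw [seqCost, ← ENNReal.tsum_mul_left]
  refine ENNReal.tsum_le_tsum fun n => ?_
  set a := eLpNorm (g n) 1 μ01 with ha
  set b := eLpNorm (g n) ⊤ μ01 with hb
  have hab : a ≤ b := elp_one_le_top (hmeas n)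
  have hbtop : b ≠ ⊤ := (htop n).ne
  have hatop : a ≠ ⊤ := (lt_of_le_of_lt hab (htop n)).ne
  rcases eq_or_ne b 0 with hb0 | hb0
  · have ha0 : a = 0 := le_antisymm (hb0 ▸ hab) (zero_le)
    simp [ha0]
  set A := a.toReal with hA
  set B := b.toReal with hB
  have hBpos : 0 < B := ENNReal.toReal_pos hb0 hbtop
  have hA0 : 0 ≤ A := ENNReal.toReal_nonneg
  have hABle : A ≤ B := ENNReal.toReal_mono hbtop hab
  have hr : (a / b).toReal = A / B := ENNReal.toReal_div a b
  have hmin : min a (ENNReal.ofReal t * b) = ENNReal.ofReal (min A (t * B)) := by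
    rw [ofReal_min', ENNReal.ofReal_mul ht.le, ENNReal.ofReal_toReal hatop,
      ENNReal.ofReal_toReal hbtop]
  rw [hmin, hr, ← ENNReal.ofReal_mul (by positivity)]
  refine ENNReal.ofReal_le_ofReal ?_
  have hr0 : 0 ≤ A / B := div_nonneg hA0 hBpos.le
  have hr1 : A / B ≤ 1 := (div_le_one hBpos).mpr hABle
  have hφr : 0 ≤ φ (A / B) := phi_nonneg hφ hr0 hr1
  have ht' : t ≠ 0 := ht.ne'
  have hB' : B ≠ 0 := hBpos.ne'
  have key : φ t / t * min A (t * B) ≤ B * φ (A / B) := by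
    rcases le_or_gt (A / B) t with hc | hc
    · have h1 : (A / B) / t * φ t ≤ φ (A / B) := phi_concave_bound hφ hr0 hc ht ht1
      have e : φ t / t * A = B * ((A / B) / t * φ t) := by field_simp
      calc φ t / t * min A (t * B) ≤ φ t / t * A :=
            mul_le_mul_of_nonneg_left (min_le_left _ _) hc1
        _ = B * ((A / B) / t * φ t) := e
        _ ≤ B * φ (A / B) := mul_le_mul_of_nonneg_left h1 hBpos.le
    · have h1 : φ t ≤ φ (A / B) :=
        hφ.mono (Set.mem_Icc.mpr ⟨ht.le, ht1⟩) (Set.mem_Icc.mpr ⟨hr0, hr1⟩) hc.le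
      calc φ t / t * min A (t * B) ≤ φ t / t * (t * B) :=
            mul_le_mul_of_nonneg_left (min_le_right _ _) hc1
        _ = B * φ t := by field_simp
        _ ≤ B * φ (A / B) := mul_le_mul_of_nonneg_left h1 hBpos.le
  calc ψ 1 * (φ t / t) * min A (t * B) = ψ 1 * (φ t / t * min A (t * B)) := by ring
    _ ≤ ψ 1 * (B * φ (A / B)) := mul_le_mul_of_nonneg_left key hψ1
    _ ≤ ψ ((n:ℝ) + 1) * (B * φ (A / B)) :=
        mul_le_mul_of_nonneg_right (psi_one_le hψ n) (mul_nonneg hBpos.le hφr)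
    _ = ψ ((n:ℝ) + 1) * B * φ (A / B) := by ring

lemma le_sum_one {f : ℝ → ℝ} {g : ℕ → ℝ → ℝ} (hg : Admissible f g) :
    eLpNorm f 1 μ01 ≤ ∑' n, eLpNorm (g n) 1 μ01 := by
  obtain ⟨hmeas, -, hpos, hsum⟩ := hg
  have h1 : eLpNorm f 1 μ01 = ∫⁻ x, ENNReal.ofReal |f x| ∂μ01 := by
    rw [eLpNorm_one_eq_lintegral_enorm]
    exact lintegral_congr fun x => ennnorm_abs (f x)
  rw [h1]
  calc ∫⁻ x, ENNReal.ofReal |f x| ∂μ01 ≤ ∫⁻ x, ∑' n, ENNReal.ofReal (g n x) ∂μ01 :=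
        lintegral_mono_ae hsum
    _ = ∑' n, ∫⁻ x, ENNReal.ofReal (g n x) ∂μ01 :=
        lintegral_tsum (f := fun n x => ENNReal.ofReal (g n x))
          (fun n => ENNReal.measurable_ofReal.comp_aemeasurable (hmeas n))
    _ = ∑' n, eLpNorm (g n) 1 μ01 := tsum_congr fun n => (elp_one_eq (hpos n)).symm

lemma indicator_sum_min {t : ℝ} (ht : 0 < t) (ht1 : t ≤ 1) {g : ℕ → ℝ → ℝ}
    (hg : Admissible ((Set.Icc 0 t).indicator fun _ => (1:ℝ)) g) :
    ENNReal.ofReal t ≤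
      ∑' n, min (eLpNorm (g n) 1 μ01) (ENNReal.ofReal t * eLpNorm (g n) ⊤ μ01) := by
  obtain ⟨hmeas, htop, hpos, hsum⟩ := hg
  have hμI : μ01 (Set.Icc 0 t) = ENNReal.ofReal t := mu01_Icc ht.le ht1
  have hae : ∀ᵐ x ∂(μ01.restrict (Set.Icc 0 t)),
      (1:ℝ≥0∞) ≤ ∑' n, ENNReal.ofReal (g n x) := by
    filter_upwards [ae_restrict_of_ae hsum, ae_restrict_mem measurableSet_Icc] with x hx hxm
    rwa [Set.indicator_of_mem hxm, abs_one, ENNReal.ofReal_one] at hx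
  have h0 : ENNReal.ofReal t ≤ ∫⁻ x in Set.Icc 0 t, ∑' n, ENNReal.ofReal (g n x) ∂μ01 := by
    calc ENNReal.ofReal t = ∫⁻ _ in Set.Icc (0:ℝ) t, 1 ∂μ01 := by rw [setLIntegral_one, hμI]
      _ ≤ ∫⁻ x in Set.Icc 0 t, ∑' n, ENNReal.ofReal (g n x) ∂μ01 := lintegral_mono_ae hae
  rw [lintegral_tsum (f := fun n x => ENNReal.ofReal (g n x))
    (fun n => ENNReal.measurable_ofReal.comp_aemeasurable ((hmeas n).restrict))] at h0
  refine h0.trans (ENNReal.tsum_le_tsum fun n => le_min ?_ ?_)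
  · calc ∫⁻ x in Set.Icc 0 t, ENNReal.ofReal (g n x) ∂μ01
        ≤ ∫⁻ x, ENNReal.ofReal (g n x) ∂μ01 := setLIntegral_le_lintegral _ _
      _ = eLpNorm (g n) 1 μ01 := (elp_one_eq (hpos n)).symm
  · have hb : ∀ᵐ x ∂μ01, ENNReal.ofReal (g n x) ≤ eLpNorm (g n) ⊤ μ01 := by
      filter_upwards [ae_le_eLpNormEssSup (f := g n) (μ := μ01)] with x hx
      rw [eLpNorm_exponent_top]
      rwa [Real.enorm_eq_ofReal (hpos n x)] at hx
    calc ∫⁻ x in Set.Icc 0 t, ENNReal.ofReal (g n x) ∂μ01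
        ≤ ∫⁻ _ in Set.Icc (0:ℝ) t, eLpNorm (g n) ⊤ μ01 ∂μ01 :=
          lintegral_mono_ae (ae_restrict_of_ae hb)
      _ = eLpNorm (g n) ⊤ μ01 * ENNReal.ofReal t := by rw [setLIntegral_const, hμI]
      _ = ENNReal.ofReal t * eLpNorm (g n) ⊤ μ01 := mul_comm _ _

lemma ofReal_nat_add_one (n : ℕ) : ENNReal.ofReal ((n:ℝ) + 1) = (n : ℝ≥0∞) + 1 := by
  rw [ENNReal.ofReal_add (Nat.cast_nonneg n) zero_le_one, ENNReal.ofReal_natCast,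
    ENNReal.ofReal_one]

lemma cost_upper_term {φ ψ : ℝ → ℝ} (hφ : IsPhi φ) (hψ : IsPsi ψ) {C : ℝ}
    (hC : ∀ t : ℝ, 0 ≤ t → t ≤ 1 → φ t ≤ C * t) {gn : ℝ → ℝ}
    (hm : AEMeasurable gn μ01) (ht : eLpNorm gn ⊤ μ01 < ⊤) (n : ℕ) :
    ENNReal.ofReal (ψ ((n:ℝ) + 1) * (eLpNorm gn ⊤ μ01).toReal *
        φ ((eLpNorm gn 1 μ01 / eLpNorm gn ⊤ μ01).toReal))
      ≤ ((n : ℝ≥0∞) + 1) * ENNReal.ofReal (ψ 1 * C) * eLpNorm gn 1 μ01 := by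
  set a := eLpNorm gn 1 μ01 with ha
  set b := eLpNorm gn ⊤ μ01 with hb
  have hab : a ≤ b := elp_one_le_top hm
  have hbt : b ≠ ⊤ := ht.ne
  have hat : a ≠ ⊤ := (hab.trans_lt ht).ne
  rcases eq_or_ne b 0 with hb0 | hb0
  · simp [hb0]
  set A := a.toReal with hA
  set B := b.toReal with hB
  have hBpos : 0 < B := ENNReal.toReal_pos hb0 hbt
  have hA0 : 0 ≤ A := ENNReal.toReal_nonneg
  have hAB : A ≤ B := ENNReal.toReal_mono hbt hab
  have hψ1 : 0 ≤ ψ 1 := (hψ.pos 1 one_pos).le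
  have hC0 : 0 ≤ C := by
    have := hC 1 zero_le_one le_rfl
    have := hφ.pos 1 one_pos le_rfl
    linarith
  have hr : (a / b).toReal = A / B := ENNReal.toReal_div a b
  rw [hr]
  have hreal : ψ ((n:ℝ) + 1) * B * φ (A / B) ≤ ((n:ℝ) + 1) * (ψ 1 * C) * A := by
    have h1 : φ (A / B) ≤ C * (A / B) :=
      hC _ (div_nonneg hA0 hBpos.le) ((div_le_one hBpos).mpr hAB)
    have h2 : ψ ((n:ℝ) + 1) ≤ ((n:ℝ) + 1) * ψ 1 := psi_le_lin hψ n
    have hψn : 0 ≤ ψ ((n:ℝ) + 1) := (hψ.pos _ (by positivity)).le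
    have e : B * (C * (A / B)) = C * A := by field_simp
    calc ψ ((n:ℝ) + 1) * B * φ (A / B) ≤ ψ ((n:ℝ) + 1) * B * (C * (A / B)) :=
          mul_le_mul_of_nonneg_left h1 (mul_nonneg hψn hBpos.le)
      _ = ψ ((n:ℝ) + 1) * (C * A) := by rw [mul_assoc, e]
      _ ≤ (((n:ℝ) + 1) * ψ 1) * (C * A) :=
          mul_le_mul_of_nonneg_right h2 (mul_nonneg hC0 hA0)
      _ = ((n:ℝ) + 1) * (ψ 1 * C) * A := by ring
  calc ENNReal.ofReal (ψ ((n:ℝ) + 1) * B * φ (A / B))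
      ≤ ENNReal.ofReal (((n:ℝ) + 1) * (ψ 1 * C) * A) := ENNReal.ofReal_le_ofReal hreal
    _ = ENNReal.ofReal ((n:ℝ) + 1) * ENNReal.ofReal (ψ 1 * C) * ENNReal.ofReal A := by
        rw [ENNReal.ofReal_mul (by positivity), ENNReal.ofReal_mul (by positivity)]
    _ = ((n : ℝ≥0∞) + 1) * ENNReal.ofReal (ψ 1 * C) * a := by
        rw [ofReal_nat_add_one, ENNReal.ofReal_toReal hat]

lemma two_mul_inv_four : (2 : ℝ≥0∞) * 4⁻¹ = 2⁻¹ := by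
  rw [show (4:ℝ≥0∞) = 2 * 2 by norm_num,
    ENNReal.mul_inv (Or.inl (by norm_num)) (Or.inl (by norm_num)), ← mul_assoc,
    ENNReal.mul_inv_cancel (by norm_num) (by norm_num), one_mul]

lemma tsum_nat_geom_aux : ∑' n : ℕ, ((n : ℝ≥0∞) + 1) * (4⁻¹ : ℝ≥0∞) ^ n ≤ 2 := by
  have h1 : ∀ n : ℕ, ((n : ℝ≥0∞) + 1) * (4⁻¹ : ℝ≥0∞) ^ n ≤ (2⁻¹ : ℝ≥0∞) ^ n := by
    intro n
    have hn : ((n : ℝ≥0∞) + 1) ≤ (2 : ℝ≥0∞) ^ n := by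
      have h := Nat.lt_two_pow_self (n := n)
      calc ((n : ℝ≥0∞) + 1) = ((n + 1 : ℕ) : ℝ≥0∞) := by push_cast; ring
        _ ≤ ((2 ^ n : ℕ) : ℝ≥0∞) := by exact_mod_cast Nat.succ_le_of_lt h
        _ = (2 : ℝ≥0∞) ^ n := by push_cast; ring
    calc ((n : ℝ≥0∞) + 1) * 4⁻¹ ^ n ≤ (2 : ℝ≥0∞) ^ n * 4⁻¹ ^ n := mul_le_mul_left hn _
      _ = ((2 : ℝ≥0∞) * 4⁻¹) ^ n := (mul_pow _ _ n).symm
      _ = (2⁻¹ : ℝ≥0∞) ^ n := by rw [two_mul_inv_four]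
  calc ∑' n : ℕ, ((n : ℝ≥0∞) + 1) * (4⁻¹ : ℝ≥0∞) ^ n ≤ ∑' n : ℕ, (2⁻¹ : ℝ≥0∞) ^ n :=
        ENNReal.tsum_le_tsum h1
    _ = 2 := by rw [ENNReal.tsum_geometric, ENNReal.one_sub_inv_two, inv_inv]

/-- Construction of a good decomposition when `φ(t) ≤ C t`. -/
lemma upper_exists {φ ψ : ℝ → ℝ} (hφ : IsPhi φ) (hψ : IsPsi ψ) {C : ℝ}
    (hC : ∀ t : ℝ, 0 ≤ t → t ≤ 1 → φ t ≤ C * t) {f : ℝ → ℝ} (hf : AEMeasurable f μ01)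
    (hfin : eLpNorm f 1 μ01 ≠ ⊤) (hne : eLpNorm f 1 μ01 ≠ 0) :
    ∃ g : ℕ → ℝ → ℝ, Admissible f g ∧
      seqCost φ ψ g ≤ ENNReal.ofReal (2 * (ψ 1 * C)) * eLpNorm f 1 μ01 := by
  classical
  set A := eLpNorm f 1 μ01 with hAdef
  set f' := hf.mk f with hf'def
  have hf'm : Measurable f' := hf.measurable_mk
  have hff' : f =ᵐ[μ01] f' := hf.ae_eq_mk
  set h : ℝ → ℝ := fun x => |f' x| with hhdef
  have hhm : Measurable h := hf'm.abs
  have hnn : ∀ x, 0 ≤ h x := fun x => abs_nonneg _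
  set ν := μ01.withDensity (fun x => ENNReal.ofReal (h x)) with hνdef
  have hν_apply : ∀ {s : Set ℝ}, MeasurableSet s →
      ν s = ∫⁻ x in s, ENNReal.ofReal (h x) ∂μ01 := fun hs => withDensity_apply _ hs
  have hνuniv : ν Set.univ = A := by
    rw [hν_apply MeasurableSet.univ, Measure.restrict_univ, hAdef, eLpNorm_congr_ae hff',
      eLpNorm_one_eq_lintegral_enorm]
    exact (lintegral_congr fun x => ennnorm_abs (f' x)).symm
  have hνfin : ∀ s : Set ℝ, ν s ≠ ⊤ := fun s =>
    ((measure_mono (Set.subset_univ s)).trans_lt (by rw [hνuniv]; exact hfin.lt_top)).ne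
  -- tail estimate
  have htail : Tendsto (fun M : ℕ => ν (h ⁻¹' Set.Ioi (M : ℝ))) atTop (𝓝 0) := by
    have hmono : Antitone (fun M : ℕ => h ⁻¹' Set.Ioi (M : ℝ)) := fun m m' hmm' =>
      Set.preimage_mono (Set.Ioi_subset_Ioi (by exact_mod_cast hmm'))
    have hInter : ⋂ M : ℕ, h ⁻¹' Set.Ioi (M : ℝ) = ∅ := by
      ext x
      simp only [Set.mem_iInter, Set.mem_preimage, Set.mem_Ioi, Set.mem_empty_iff_false,
        iff_false, not_forall, not_lt]
      exact exists_nat_ge (h x)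
    have := tendsto_measure_iInter_atTop (μ := ν)
      (fun M => (hhm measurableSet_Ioi).nullMeasurableSet) hmono ⟨0, hνfin _⟩
    rwa [hInter, measure_empty] at this
  have hTsel : ∀ n : ℕ, ∃ M : ℕ, ν (h ⁻¹' Set.Ioi (M : ℝ)) ≤ A * (4⁻¹ : ℝ≥0∞) ^ n := by
    intro n
    have hε : (0 : ℝ≥0∞) < A * 4⁻¹ ^ n :=
      ENNReal.mul_pos hne (pow_ne_zero _ (ENNReal.inv_ne_zero.mpr (by norm_num)))
    obtain ⟨M, hM⟩ := (htail.eventually_lt_const hε).exists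
    exact ⟨M, hM.le⟩
  choose Lsel hLsel using hTsel
  set Lb : ℕ → ℝ := fun n => ((Lsel n + n : ℕ) : ℝ) with hLbdef
  have hLb_ge : ∀ n : ℕ, (n : ℝ) ≤ Lb n := fun n => by
    show (n : ℝ) ≤ ((Lsel n + n : ℕ) : ℝ)
    exact_mod_cast Nat.le_add_left n (Lsel n)
  have hLb_nonneg : ∀ n : ℕ, (0:ℝ) ≤ Lb n := fun n => Nat.cast_nonneg _
  have hLb_tail : ∀ n, ν (h ⁻¹' Set.Ioi (Lb n)) ≤ A * (4⁻¹ : ℝ≥0∞) ^ n := by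
    intro n
    refine le_trans (measure_mono (Set.preimage_mono (Set.Ioi_subset_Ioi ?_))) (hLsel n)
    show ((Lsel n : ℕ) : ℝ) ≤ ((Lsel n + n : ℕ) : ℝ)
    exact_mod_cast Nat.le_add_right (Lsel n) n
  -- the pieces
  set l : ℕ → ℝ := fun n => if n = 0 then -1 else Lb n with hldef
  set S : ℕ → Set ℝ := fun n => h ⁻¹' Set.Ioc (l n) (Lb (n + 1)) with hSdef
  have hSmeas : ∀ n, MeasurableSet (S n) := fun n => hhm measurableSet_Ioc
  set g : ℕ → ℝ → ℝ := fun n => (S n).indicator h with hgdef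
  have hgm : ∀ n, Measurable (g n) := fun n => hhm.indicator (hSmeas n)
  have hgpos : ∀ n x, 0 ≤ g n x := fun n x => Set.indicator_nonneg (fun y _ => hnn y) x
  have hcover : ∀ x : ℝ, ∃ n, x ∈ S n := by
    intro x
    have hex : ∃ n : ℕ, h x ≤ Lb (n + 1) := by
      obtain ⟨m, hm⟩ := exists_nat_ge (h x)
      refine ⟨m, hm.trans ?_⟩
      have h1 := hLb_ge (m + 1)
      push_cast at h1
      linarith
    refine ⟨Nat.find hex, ?_⟩
    have hn2 : h x ≤ Lb (Nat.find hex + 1) := Nat.find_spec hex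
    simp only [hSdef, Set.mem_preimage, Set.mem_Ioc]
    refine ⟨?_, hn2⟩
    rcases Nat.eq_zero_or_pos (Nat.find hex) with h0 | hp
    · rw [h0, hldef]
      simp only [if_pos rfl]
      exact lt_of_lt_of_le (by norm_num) (hnn x)
    · have hfind := Nat.find_min hex (Nat.sub_lt hp one_pos)
      have heq : Nat.find hex - 1 + 1 = Nat.find hex := Nat.succ_pred_eq_of_pos hp
      rw [heq] at hfind
      rw [hldef]
      simp only [if_neg hp.ne']
      exact lt_of_not_ge hfind
  have hgtop : ∀ n, eLpNorm (g n) ⊤ μ01 < ⊤ := by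
    intro n
    have hbd : ∀ x, ‖g n x‖ ≤ Lb (n + 1) := by
      intro x
      rw [Real.norm_eq_abs, abs_of_nonneg (hgpos n x)]
      by_cases hx : x ∈ S n
      · rw [hgdef]
        simp only [Set.indicator_of_mem hx]
        have := hx
        simp only [hSdef, Set.mem_preimage, Set.mem_Ioc] at this
        exact this.2
      · rw [hgdef]; simp only [Set.indicator_of_notMem hx]; exact hLb_nonneg (n + 1)
    calc eLpNorm (g n) ⊤ μ01 = eLpNormEssSup (g n) μ01 := eLpNorm_exponent_top
      _ ≤ ENNReal.ofReal (Lb (n + 1)) := eLpNormEssSup_le_of_ae_bound (.of_forall hbd)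
      _ < ⊤ := ENNReal.ofReal_lt_top
  have hadm : Admissible f g := by
    refine ⟨fun n => (hgm n).aemeasurable, hgtop, hgpos, ?_⟩
    filter_upwards [hff'] with x hx
    obtain ⟨m, hm⟩ := hcover x
    calc ENNReal.ofReal |f x| = ENNReal.ofReal (g m x) := by
          rw [hx, hgdef]; simp only [Set.indicator_of_mem hm]; rfl
      _ ≤ ∑' n, ENNReal.ofReal (g n x) := ENNReal.le_tsum m
  refine ⟨g, hadm, ?_⟩
  have ha_eq : ∀ n, eLpNorm (g n) 1 μ01 = ν (S n) := by
    intro n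
    rw [elp_one_eq (hgpos n), hν_apply (hSmeas n), ← lintegral_indicator (hSmeas n)]
    refine lintegral_congr fun x => ?_
    by_cases hx : x ∈ S n
    · rw [hgdef]; simp only [Set.indicator_of_mem hx]
    · rw [hgdef]; simp only [Set.indicator_of_notMem hx, ENNReal.ofReal_zero]
  have ha_le : ∀ n, eLpNorm (g n) 1 μ01 ≤ A * (4⁻¹ : ℝ≥0∞) ^ n := by
    intro n
    rw [ha_eq n]
    cases n with
    | zero =>
      simpa using (measure_mono (Set.subset_univ (S 0))).trans (le_of_eq hνuniv)
    | succ k =>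
      refine le_trans (measure_mono ?_) (hLb_tail (k + 1))
      rw [hSdef, hldef]
      simp only [if_neg (Nat.succ_ne_zero k)]
      exact Set.preimage_mono Set.Ioc_subset_Ioi_self
  have hψ1' : (0:ℝ) ≤ ψ 1 := (hψ.pos 1 one_pos).le
  have hC0' : (0:ℝ) ≤ C := by
    have h1 := hC 1 zero_le_one le_rfl
    have h2 := hφ.pos 1 one_pos le_rfl
    linarith
  calc seqCost φ ψ g
      ≤ ∑' n : ℕ, ((n : ℝ≥0∞) + 1) * ENNReal.ofReal (ψ 1 * C) * eLpNorm (g n) 1 μ01 :=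
        ENNReal.tsum_le_tsum fun n =>
          cost_upper_term hφ hψ hC ((hgm n).aemeasurable) (hgtop n) n
    _ ≤ ∑' n : ℕ, ((n : ℝ≥0∞) + 1) * ENNReal.ofReal (ψ 1 * C) * (A * (4⁻¹ : ℝ≥0∞) ^ n) :=
        ENNReal.tsum_le_tsum fun n => mul_le_mul_right (ha_le n) _
    _ = ENNReal.ofReal (ψ 1 * C) * A * ∑' n : ℕ, ((n : ℝ≥0∞) + 1) * (4⁻¹ : ℝ≥0∞) ^ n := by
        rw [← ENNReal.tsum_mul_left]
        exact tsum_congr fun n => by ring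
    _ ≤ ENNReal.ofReal (ψ 1 * C) * A * 2 := mul_le_mul_right tsum_nat_geom_aux _
    _ = ENNReal.ofReal (2 * (ψ 1 * C)) * A := by
        rw [show (2:ℝ) * (ψ 1 * C) = ψ 1 * C * 2 by ring,
          ENNReal.ofReal_mul (mul_nonneg hψ1' hC0'), ENNReal.ofReal_ofNat]
        ring

/-- `QA_{φ,ψ} = L¹` (with equivalent norms) if and only if `φ` is
equivalent to the identity, i.e. `φ(t) ≤ C t` on `[0,1]` for some `C > 0`
(the converse inequality `φ(1) t ≤ φ(t)` being automatic from concavity). -/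
theorem stmt9 {φ ψ : ℝ → ℝ} (hφ : IsPhi φ) (hψ : IsPsi ψ) :
    (∃ K : ℝ, 0 < K ∧ ∀ f : ℝ → ℝ, AEMeasurable f μ01 →
      ENNReal.ofReal K⁻¹ * eLpNorm f 1 μ01 ≤ QANorm φ ψ f ∧
      QANorm φ ψ f ≤ ENNReal.ofReal K * eLpNorm f 1 μ01) ↔
    (∃ C : ℝ, 0 < C ∧ ∀ t : ℝ, 0 ≤ t → t ≤ 1 → φ t ≤ C * t) := by
  constructor
  · rintro ⟨K, hK0, hK⟩
    have hψ1 : 0 < ψ 1 := hψ.pos 1 one_pos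
    refine ⟨K / ψ 1, by positivity, fun t ht0 ht1 => ?_⟩
    rcases eq_or_lt_of_le ht0 with h0 | h0
    · simp [← h0, hφ.zero]
    set f : ℝ → ℝ := (Set.Icc 0 t).indicator fun _ => 1 with hfdef
    have hfm : AEMeasurable f μ01 :=
      (measurable_const.indicator measurableSet_Icc).aemeasurable
    have hf1 : eLpNorm f 1 μ01 = ENNReal.ofReal t := by
      rw [eLpNorm_one_eq_lintegral_enorm]
      have heq : ∀ x, ‖f x‖ₑ = (Set.Icc 0 t).indicator (fun _ => (1:ℝ≥0∞)) x := by
        intro x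
        by_cases hx : x ∈ Set.Icc 0 t
        · rw [hfdef]
          simp only [Set.indicator_of_mem hx]
          norm_num
        · rw [hfdef]
          simp only [Set.indicator_of_notMem hx]
          norm_num
      rw [lintegral_congr heq, lintegral_indicator measurableSet_Icc, setLIntegral_one,
        mu01_Icc h0.le ht1]
    have hQu := (hK f hfm).2
    rw [hf1] at hQu
    have hφt : 0 ≤ φ t := phi_nonneg hφ h0.le ht1
    have hQl : ENNReal.ofReal (ψ 1 * (φ t / t) * t) ≤ QANorm φ ψ f := by
      rw [QANorm, ENNReal.ofReal_mul (by positivity)]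
      refine le_iInf fun g => le_iInf fun hg => ?_
      refine le_trans (mul_le_mul' le_rfl (indicator_sum_min h0 ht1 hg))
        (cost_lower hφ hψ hg.1 hg.2.1 h0 ht1)
    have hcomb : ENNReal.ofReal (ψ 1 * (φ t / t) * t) ≤ ENNReal.ofReal (K * t) := by
      refine hQl.trans (hQu.trans ?_)
      rw [← ENNReal.ofReal_mul hK0.le]
    have hreal : ψ 1 * (φ t / t) * t ≤ K * t :=
      (ENNReal.ofReal_le_ofReal_iff (by positivity)).mp hcomb
    have hkey : ψ 1 * φ t ≤ K * t := by
      have ht' : t ≠ 0 := h0.ne'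
      calc ψ 1 * φ t = ψ 1 * (φ t / t) * t := by field_simp
        _ ≤ K * t := hreal
    rw [div_mul_eq_mul_div, le_div_iff₀ hψ1]
    linarith
  · rintro ⟨C, hC0, hC⟩
    have hψ1 : 0 < ψ 1 := hψ.pos 1 one_pos
    have hφ1 : 0 < φ 1 := hφ.pos 1 one_pos le_rfl
    set K : ℝ := max (2 * (ψ 1 * C)) (ψ 1 * φ 1)⁻¹ with hKdef
    have hK0 : 0 < K := lt_of_lt_of_le (by positivity) (le_max_right _ _)
    refine ⟨K, hK0, fun f hf => ⟨?_, ?_⟩⟩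
    · -- lower bound
      have hKinv : K⁻¹ ≤ ψ 1 * φ 1 := by
        have h1 : (ψ 1 * φ 1)⁻¹ ≤ K := le_max_right _ _
        calc K⁻¹ ≤ ((ψ 1 * φ 1)⁻¹)⁻¹ := inv_anti₀ (by positivity) h1
          _ = ψ 1 * φ 1 := inv_inv _
      rw [QANorm]
      refine le_iInf fun g => le_iInf fun hg => ?_
      obtain ⟨hmeas, htop, hpos, hsum⟩ := hg
      have hcl := cost_lower hφ hψ hmeas htop one_pos le_rfl
      have hmin : ∀ n, min (eLpNorm (g n) 1 μ01) (ENNReal.ofReal 1 * eLpNorm (g n) ⊤ μ01)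
          = eLpNorm (g n) 1 μ01 := by
        intro n
        rw [ENNReal.ofReal_one, one_mul]
        exact min_eq_left (elp_one_le_top (hmeas n))
      simp only [hmin, div_one] at hcl
      calc ENNReal.ofReal K⁻¹ * eLpNorm f 1 μ01
          ≤ ENNReal.ofReal (ψ 1 * φ 1) * ∑' n, eLpNorm (g n) 1 μ01 :=
            mul_le_mul' (ENNReal.ofReal_le_ofReal hKinv)
              (le_sum_one ⟨hmeas, htop, hpos, hsum⟩)
        _ ≤ seqCost φ ψ g := hcl
    · -- upper bound
      rcases eq_or_ne (eLpNorm f 1 μ01) ⊤ with htp | htp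
      · rw [htp, ENNReal.mul_top (ENNReal.ofReal_pos.mpr hK0).ne']
        exact le_top
      rcases eq_or_ne (eLpNorm f 1 μ01) 0 with hz | hz
      · have hf0 : f =ᵐ[μ01] 0 :=
          (eLpNorm_eq_zero_iff hf.aestronglyMeasurable one_ne_zero).mp hz
        have hadm : Admissible f (fun _ _ => 0) := by
          refine ⟨fun _ => aemeasurable_const, fun _ => ?_, fun _ _ => le_rfl, ?_⟩
          · have e0 : eLpNorm (fun _ : ℝ => (0:ℝ)) ⊤ μ01 = 0 := eLpNorm_zero
            rw [e0]; exact ENNReal.zero_lt_top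
          · filter_upwards [hf0] with x hx
            simp [hx]
        have hle : QANorm φ ψ f ≤ seqCost φ ψ (fun _ _ => 0) := iInf₂_le _ hadm
        have hzero : seqCost φ ψ (fun _ _ => 0) = 0 := by
          have e0 : eLpNorm (fun _ : ℝ => (0:ℝ)) ⊤ μ01 = 0 := eLpNorm_zero
          simp [seqCost, e0]
        exact le_trans (hzero ▸ hle) (zero_le)
      · obtain ⟨g, hadm, hcost⟩ := upper_exists hφ hψ hC hf htp hz
        refine le_trans (iInf₂_le g hadm) (hcost.trans ?_)
        exact mul_le_mul' (ENNReal.ofReal_le_ofReal (le_max_left _ _)) le_rfl
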